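/- arXiv:1805.10112 — 3 statements merged into one kernel-verified Lean document; each statement's English description precedes it below -/
import Mathlib

section
/- Let E be a finite set, Γ a finite nonempty collection of subsets of E, and E = E₁ ⊔ E₂ a partition into two nonempty sets that divides Γ. Then MEO(Γ) = MEO(Γ₁) + MEO(Γ₂), where Γᵢ = {γ ∩ Eᵢ : γ ∈ Γ}. -/
noncomputable section
open Finset

/-- A probability mass function on a finite family `Γ` of subsets of `E`:
nonnegative, supported on `Γ`, summing to one. -/
def IsPmf {E : Type*} [DecidableEq E] (Γ : Finset (Finset E)) (μ : Finset E → ℝ) : Prop :=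
  (∀ γ, 0 ≤ μ γ) ∧ (∀ γ, γ ∉ Γ → μ γ = 0) ∧ ∑ γ ∈ Γ, μ γ = 1

/-- Expected overlap of two iid samples from `μ`. -/
def EO {E : Type*} [DecidableEq E] (Γ : Finset (Finset E)) (μ : Finset E → ℝ) : ℝ :=
  ∑ γ ∈ Γ, ∑ γ' ∈ Γ, ((γ ∩ γ').card : ℝ) * μ γ * μ γ'

/-- Minimum expected overlap over all pmfs on `Γ`. -/
def MEO {E : Type*} [DecidableEq E] (Γ : Finset (Finset E)) : ℝ :=
  sInf {x : ℝ | ∃ μ, IsPmf Γ μ ∧ x = EO Γ μ}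

lemma aux_exists_pmf {E : Type*} [DecidableEq E] (Γ : Finset (Finset E)) (h : Γ.Nonempty) :
    ∃ μ, IsPmf Γ μ := by
  obtain ⟨γ₀, h₀⟩ := h
  classical
  refine ⟨fun γ => if γ = γ₀ then 1 else 0, ?_, ?_, ?_⟩
  · intro γ; dsimp only; split <;> norm_num
  · intro γ hγ; simp only [ite_eq_right_iff]; rintro rfl; exact absurd h₀ hγ
  · rw [Finset.sum_ite_eq' Γ γ₀ (fun _ => (1:ℝ))]; simp [h₀]

lemma aux_eo_nonneg {E : Type*} [DecidableEq E] (Γ : Finset (Finset E)) (μ : Finset E → ℝ)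
    (h : IsPmf Γ μ) : 0 ≤ EO Γ μ := by
  refine Finset.sum_nonneg fun γ _ => Finset.sum_nonneg fun γ' _ => ?_
  exact mul_nonneg (mul_nonneg (by positivity) (h.1 γ)) (h.1 γ')

lemma aux_meo_set_nonempty {E : Type*} [DecidableEq E] (Γ : Finset (Finset E)) (h : Γ.Nonempty) :
    {x : ℝ | ∃ μ, IsPmf Γ μ ∧ x = EO Γ μ}.Nonempty := by
  obtain ⟨μ, hμ⟩ := aux_exists_pmf Γ h
  exact ⟨EO Γ μ, μ, hμ, rfl⟩

lemma aux_meo_bddBelow {E : Type*} [DecidableEq E] (Γ : Finset (Finset E)) :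
    BddBelow {x : ℝ | ∃ μ, IsPmf Γ μ ∧ x = EO Γ μ} := by
  refine ⟨0, fun x hx => ?_⟩
  obtain ⟨μ, hμ, rfl⟩ := hx
  exact aux_eo_nonneg Γ μ hμ

/-- Generic fiberwise regrouping for double sums. -/
lemma aux_fiber_double {E : Type*} [DecidableEq E] (Γ : Finset (Finset E))
    (f : Finset E → Finset E) (μ : Finset E → ℝ) (c : Finset E → Finset E → ℝ) :
    ∑ δ ∈ Γ.image f, ∑ δ' ∈ Γ.image f,
        c δ δ' * (∑ γ ∈ Γ.filter (fun γ => f γ = δ), μ γ)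
               * (∑ γ' ∈ Γ.filter (fun γ => f γ = δ'), μ γ') =
    ∑ γ ∈ Γ, ∑ γ' ∈ Γ, c (f γ) (f γ') * μ γ * μ γ' := by
  classical
  have hmaps : ∀ γ ∈ Γ, f γ ∈ Γ.image f := fun γ hγ => Finset.mem_image_of_mem f hγ
  rw [← Finset.sum_fiberwise_of_maps_to hmaps
      (fun γ => ∑ γ' ∈ Γ, c (f γ) (f γ') * μ γ * μ γ')]
  refine Finset.sum_congr rfl fun δ hδ => ?_
  symm
  calc ∑ γ ∈ Γ.filter (fun γ => f γ = δ), ∑ γ' ∈ Γ, c (f γ) (f γ') * μ γ * μ γ'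
      = ∑ γ' ∈ Γ, ∑ γ ∈ Γ.filter (fun γ => f γ = δ), c δ (f γ') * μ γ * μ γ' := by
        rw [Finset.sum_comm]
        refine Finset.sum_congr rfl fun γ' _ => Finset.sum_congr rfl fun γ hγ => ?_
        rw [(Finset.mem_filter.1 hγ).2]
    _ = ∑ δ' ∈ Γ.image f, ∑ γ' ∈ Γ.filter (fun γ => f γ = δ'),
          ∑ γ ∈ Γ.filter (fun γ => f γ = δ), c δ (f γ') * μ γ * μ γ' := by
        rw [Finset.sum_fiberwise_of_maps_to hmaps]
    _ = ∑ δ' ∈ Γ.image f,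
          c δ δ' * (∑ γ ∈ Γ.filter (fun γ => f γ = δ), μ γ)
                 * (∑ γ' ∈ Γ.filter (fun γ => f γ = δ'), μ γ') := by
        refine Finset.sum_congr rfl fun δ' hδ' => ?_
        rw [mul_assoc, Finset.sum_mul_sum, Finset.mul_sum, Finset.sum_comm]
        refine Finset.sum_congr rfl fun γ' hγ' => ?_
        rw [Finset.mul_sum]
        refine Finset.sum_congr rfl fun γ hγ => ?_
        rw [(Finset.mem_filter.1 hγ).2]; ring

/-- the serial rule for MEO when a partition `E = E₁ ⊔ E₂` divides `Γ`. -/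
theorem meo_serial_rule {E : Type*} [Fintype E] [DecidableEq E]
    (Γ : Finset (Finset E)) (hΓ : Γ.Nonempty)
    (E₁ E₂ : Finset E) (hE₁ : E₁.Nonempty) (hE₂ : E₂.Nonempty)
    (hdisj : Disjoint E₁ E₂) (hcover : E₁ ∪ E₂ = Finset.univ)
    (hdiv : Γ = Finset.image₂ (· ∪ ·) (Γ.image (· ∩ E₁)) (Γ.image (· ∩ E₂))) :
    MEO Γ = MEO (Γ.image (· ∩ E₁)) + MEO (Γ.image (· ∩ E₂)) := by
  classical
  set Γ₁ := Γ.image (· ∩ E₁) with hΓ₁def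
  set Γ₂ := Γ.image (· ∩ E₂) with hΓ₂def
  have hΓ₁ne : Γ₁.Nonempty := hΓ.image _
  have hΓ₂ne : Γ₂.Nonempty := hΓ.image _
  -- basic facts about members of Γ₁, Γ₂
  have hsub1 : ∀ δ ∈ Γ₁, δ ⊆ E₁ := by
    intro δ hδ
    obtain ⟨γ, _, rfl⟩ := Finset.mem_image.1 hδ
    exact Finset.inter_subset_right
  have hsub2 : ∀ δ ∈ Γ₂, δ ⊆ E₂ := by
    intro δ hδ
    obtain ⟨γ, _, rfl⟩ := Finset.mem_image.1 hδ
    exact Finset.inter_subset_right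
  have hself : ∀ γ : Finset E, (γ ∩ E₁) ∪ (γ ∩ E₂) = γ := by
    intro γ
    rw [← Finset.inter_union_distrib_left, hcover, Finset.inter_univ]
  have hproj1 : ∀ δ₁ ∈ Γ₁, ∀ δ₂ ∈ Γ₂, (δ₁ ∪ δ₂) ∩ E₁ = δ₁ := by
    intro δ₁ h₁ δ₂ h₂
    rw [Finset.union_inter_distrib_right, Finset.inter_eq_left.2 (hsub1 δ₁ h₁),
      Finset.disjoint_iff_inter_eq_empty.1 (hdisj.symm.mono_left (hsub2 δ₂ h₂)),
      Finset.union_empty]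
  have hproj2 : ∀ δ₁ ∈ Γ₁, ∀ δ₂ ∈ Γ₂, (δ₁ ∪ δ₂) ∩ E₂ = δ₂ := by
    intro δ₁ h₁ δ₂ h₂
    rw [Finset.union_inter_distrib_right, Finset.inter_eq_left.2 (hsub2 δ₂ h₂),
      Finset.disjoint_iff_inter_eq_empty.1 (hdisj.mono_left (hsub1 δ₁ h₁)),
      Finset.empty_union]
  -- reparametrization of sums over Γ
  have hrepar : ∀ g : Finset E → ℝ,
      ∑ γ ∈ Γ, g γ = ∑ δ₁ ∈ Γ₁, ∑ δ₂ ∈ Γ₂, g (δ₁ ∪ δ₂) := by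
    intro g
    rw [← Finset.sum_product']
    refine Finset.sum_nbij' (fun γ => (γ ∩ E₁, γ ∩ E₂)) (fun p => p.1 ∪ p.2) ?_ ?_ ?_ ?_ ?_
    · intro γ hγ
      exact Finset.mem_product.2 ⟨Finset.mem_image_of_mem _ hγ, Finset.mem_image_of_mem _ hγ⟩
    · intro p hp
      obtain ⟨h1, h2⟩ := Finset.mem_product.1 hp
      rw [hdiv]; exact Finset.mem_image₂_of_mem h1 h2
    · intro γ _; exact hself γ
    · intro p hp
      obtain ⟨h1, h2⟩ := Finset.mem_product.1 hp
      exact Prod.ext (hproj1 _ h1 _ h2) (hproj2 _ h1 _ h2)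
    · intro γ hγ
      rw [hself γ]
  -- splitting cardinalities
  have hcard : ∀ γ γ' : Finset E, ((γ ∩ γ').card : ℝ) =
      (((γ ∩ E₁) ∩ (γ' ∩ E₁)).card : ℝ) + (((γ ∩ E₂) ∩ (γ' ∩ E₂)).card : ℝ) := by
    intro γ γ'
    have h1 : (γ ∩ E₁) ∩ (γ' ∩ E₁) = (γ ∩ γ') ∩ E₁ := by
      ext a; simp only [Finset.mem_inter]; tauto
    have h2 : (γ ∩ E₂) ∩ (γ' ∩ E₂) = (γ ∩ γ') ∩ E₂ := by
      ext a; simp only [Finset.mem_inter]; tauto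
    have h3 : ((γ ∩ γ') ∩ E₁) ∪ ((γ ∩ γ') ∩ E₂) = γ ∩ γ' := hself _
    have h4 : Disjoint ((γ ∩ γ') ∩ E₁) ((γ ∩ γ') ∩ E₂) :=
      (hdisj.mono_left Finset.inter_subset_right).mono_right Finset.inter_subset_right
    have h5 := Finset.card_union_of_disjoint h4
    rw [h3] at h5
    rw [h1, h2, h5]; push_cast; ring
  have hmaps1 : ∀ γ ∈ Γ, γ ∩ E₁ ∈ Γ₁ := fun γ hγ => Finset.mem_image_of_mem _ hγ
  have hmaps2 : ∀ γ ∈ Γ, γ ∩ E₂ ∈ Γ₂ := fun γ hγ => Finset.mem_image_of_mem _ hγ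
  -- the key identity: any pmf on Γ pushes forward to pmfs on Γ₁, Γ₂ with the same total EO
  have hpush : ∀ μ : Finset E → ℝ, IsPmf Γ μ →
      IsPmf Γ₁ (fun δ => ∑ γ ∈ Γ.filter (fun γ => γ ∩ E₁ = δ), μ γ) ∧
      IsPmf Γ₂ (fun δ => ∑ γ ∈ Γ.filter (fun γ => γ ∩ E₂ = δ), μ γ) ∧
      EO Γ μ = EO Γ₁ (fun δ => ∑ γ ∈ Γ.filter (fun γ => γ ∩ E₁ = δ), μ γ)
             + EO Γ₂ (fun δ => ∑ γ ∈ Γ.filter (fun γ => γ ∩ E₂ = δ), μ γ) := by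
    intro μ hμ
    have hpmf1 : IsPmf Γ₁ (fun δ => ∑ γ ∈ Γ.filter (fun γ => γ ∩ E₁ = δ), μ γ) := by
      refine ⟨fun δ => Finset.sum_nonneg fun γ _ => hμ.1 γ, ?_, ?_⟩
      · intro δ hδ
        refine Finset.sum_eq_zero fun γ hγ => ?_
        obtain ⟨hγΓ, hγδ⟩ := Finset.mem_filter.1 hγ
        exact absurd (hγδ ▸ hmaps1 γ hγΓ) hδ
      · rw [Finset.sum_fiberwise_of_maps_to hmaps1 μ]; exact hμ.2.2
    have hpmf2 : IsPmf Γ₂ (fun δ => ∑ γ ∈ Γ.filter (fun γ => γ ∩ E₂ = δ), μ γ) := by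
      refine ⟨fun δ => Finset.sum_nonneg fun γ _ => hμ.1 γ, ?_, ?_⟩
      · intro δ hδ
        refine Finset.sum_eq_zero fun γ hγ => ?_
        obtain ⟨hγΓ, hγδ⟩ := Finset.mem_filter.1 hγ
        exact absurd (hγδ ▸ hmaps2 γ hγΓ) hδ
      · rw [Finset.sum_fiberwise_of_maps_to hmaps2 μ]; exact hμ.2.2
    refine ⟨hpmf1, hpmf2, ?_⟩
    have e1 := aux_fiber_double Γ (· ∩ E₁) μ (fun δ δ' => ((δ ∩ δ').card : ℝ))
    have e2 := aux_fiber_double Γ (· ∩ E₂) μ (fun δ δ' => ((δ ∩ δ').card : ℝ))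
    unfold EO
    calc ∑ γ ∈ Γ, ∑ γ' ∈ Γ, ((γ ∩ γ').card : ℝ) * μ γ * μ γ'
        = (∑ γ ∈ Γ, ∑ γ' ∈ Γ, (((γ ∩ E₁) ∩ (γ' ∩ E₁)).card : ℝ) * μ γ * μ γ')
          + ∑ γ ∈ Γ, ∑ γ' ∈ Γ, (((γ ∩ E₂) ∩ (γ' ∩ E₂)).card : ℝ) * μ γ * μ γ' := by
          rw [← Finset.sum_add_distrib]
          refine Finset.sum_congr rfl fun γ _ => ?_
          rw [← Finset.sum_add_distrib]
          refine Finset.sum_congr rfl fun γ' _ => ?_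
          rw [hcard γ γ']; ring
      _ = _ := by rw [← e1, ← e2]
  -- the product construction: pmfs on Γ₁ and Γ₂ combine to a pmf on Γ
  have hprod : ∀ μ₁ μ₂ : Finset E → ℝ, IsPmf Γ₁ μ₁ → IsPmf Γ₂ μ₂ →
      ∃ μ, IsPmf Γ μ ∧ EO Γ μ = EO Γ₁ μ₁ + EO Γ₂ μ₂ := by
    intro μ₁ μ₂ h₁ h₂
    set μ : Finset E → ℝ := fun γ => μ₁ (γ ∩ E₁) * μ₂ (γ ∩ E₂) with hμdef
    have hμval : ∀ δ₁ ∈ Γ₁, ∀ δ₂ ∈ Γ₂, μ (δ₁ ∪ δ₂) = μ₁ δ₁ * μ₂ δ₂ := by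
      intro δ₁ hh₁ δ₂ hh₂
      have : μ (δ₁ ∪ δ₂) = μ₁ ((δ₁ ∪ δ₂) ∩ E₁) * μ₂ ((δ₁ ∪ δ₂) ∩ E₂) := rfl
      rw [this, hproj1 _ hh₁ _ hh₂, hproj2 _ hh₁ _ hh₂]
    have hpmf : IsPmf Γ μ := by
      refine ⟨fun γ => mul_nonneg (h₁.1 _) (h₂.1 _), ?_, ?_⟩
      · intro γ hγ
        by_cases hc1 : γ ∩ E₁ ∈ Γ₁
        · by_cases hc2 : γ ∩ E₂ ∈ Γ₂
          · refine absurd ?_ hγ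
            rw [hdiv, ← hself γ]
            exact Finset.mem_image₂_of_mem hc1 hc2
          · show μ₁ (γ ∩ E₁) * μ₂ (γ ∩ E₂) = 0
            rw [h₂.2.1 _ hc2, mul_zero]
        · show μ₁ (γ ∩ E₁) * μ₂ (γ ∩ E₂) = 0
          rw [h₁.2.1 _ hc1, zero_mul]
      · rw [hrepar μ]
        calc ∑ δ₁ ∈ Γ₁, ∑ δ₂ ∈ Γ₂, μ (δ₁ ∪ δ₂)
            = ∑ δ₁ ∈ Γ₁, ∑ δ₂ ∈ Γ₂, μ₁ δ₁ * μ₂ δ₂ :=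
              Finset.sum_congr rfl fun δ₁ hh₁ => Finset.sum_congr rfl
                fun δ₂ hh₂ => hμval δ₁ hh₁ δ₂ hh₂
          _ = (∑ δ₁ ∈ Γ₁, μ₁ δ₁) * (∑ δ₂ ∈ Γ₂, μ₂ δ₂) := by
              rw [Finset.sum_mul_sum]
          _ = 1 := by rw [h₁.2.2, h₂.2.2, mul_one]
    obtain ⟨hν₁, hν₂, hEO⟩ := hpush μ hpmf
    -- the pushforwards of the product measure agree with μ₁, μ₂ on their supports
    have hν₁eq : ∀ δ ∈ Γ₁, (∑ γ ∈ Γ.filter (fun γ => γ ∩ E₁ = δ), μ γ) = μ₁ δ := by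
      intro δ hδ
      have hfib : ∑ γ ∈ Γ.filter (fun γ => γ ∩ E₁ = δ), μ₂ (γ ∩ E₂) = ∑ δ₂ ∈ Γ₂, μ₂ δ₂ := by
        refine Finset.sum_nbij' (fun γ => γ ∩ E₂) (fun δ₂ => δ ∪ δ₂) ?_ ?_ ?_ ?_ ?_
        · intro γ hγ; exact hmaps2 γ (Finset.mem_filter.1 hγ).1
        · intro δ₂ hδ₂
          refine Finset.mem_filter.2 ⟨?_, hproj1 _ hδ _ hδ₂⟩
          rw [hdiv]; exact Finset.mem_image₂_of_mem hδ hδ₂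
        · intro γ hγ
          rw [← (Finset.mem_filter.1 hγ).2]; exact hself γ
        · intro δ₂ hδ₂; exact hproj2 _ hδ _ hδ₂
        · intro γ hγ; rfl
      calc ∑ γ ∈ Γ.filter (fun γ => γ ∩ E₁ = δ), μ γ
          = ∑ γ ∈ Γ.filter (fun γ => γ ∩ E₁ = δ), μ₁ δ * μ₂ (γ ∩ E₂) := by
            refine Finset.sum_congr rfl fun γ hγ => ?_
            show μ₁ (γ ∩ E₁) * μ₂ (γ ∩ E₂) = _
            rw [(Finset.mem_filter.1 hγ).2]
        _ = μ₁ δ * ∑ γ ∈ Γ.filter (fun γ => γ ∩ E₁ = δ), μ₂ (γ ∩ E₂) := by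
            rw [Finset.mul_sum]
        _ = μ₁ δ := by rw [hfib, h₂.2.2, mul_one]
    have hν₂eq : ∀ δ ∈ Γ₂, (∑ γ ∈ Γ.filter (fun γ => γ ∩ E₂ = δ), μ γ) = μ₂ δ := by
      intro δ hδ
      have hfib : ∑ γ ∈ Γ.filter (fun γ => γ ∩ E₂ = δ), μ₁ (γ ∩ E₁) = ∑ δ₁ ∈ Γ₁, μ₁ δ₁ := by
        refine Finset.sum_nbij' (fun γ => γ ∩ E₁) (fun δ₁ => δ₁ ∪ δ) ?_ ?_ ?_ ?_ ?_
        · intro γ hγ; exact hmaps1 γ (Finset.mem_filter.1 hγ).1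
        · intro δ₁ hδ₁
          refine Finset.mem_filter.2 ⟨?_, hproj2 _ hδ₁ _ hδ⟩
          rw [hdiv]; exact Finset.mem_image₂_of_mem hδ₁ hδ
        · intro γ hγ
          rw [← (Finset.mem_filter.1 hγ).2]; exact hself γ
        · intro δ₁ hδ₁; exact hproj1 _ hδ₁ _ hδ
        · intro γ hγ; rfl
      calc ∑ γ ∈ Γ.filter (fun γ => γ ∩ E₂ = δ), μ γ
          = ∑ γ ∈ Γ.filter (fun γ => γ ∩ E₂ = δ), μ₁ (γ ∩ E₁) * μ₂ δ := by
            refine Finset.sum_congr rfl fun γ hγ => ?_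
            show μ₁ (γ ∩ E₁) * μ₂ (γ ∩ E₂) = _
            rw [(Finset.mem_filter.1 hγ).2]
        _ = (∑ γ ∈ Γ.filter (fun γ => γ ∩ E₂ = δ), μ₁ (γ ∩ E₁)) * μ₂ δ := by
            rw [Finset.sum_mul]
        _ = μ₂ δ := by rw [hfib, h₁.2.2, one_mul]
    have e1 : EO Γ₁ (fun δ => ∑ γ ∈ Γ.filter (fun γ => γ ∩ E₁ = δ), μ γ) = EO Γ₁ μ₁ := by
      unfold EO
      exact Finset.sum_congr rfl fun δ hδ => Finset.sum_congr rfl fun δ' hδ' => by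
        dsimp only; rw [hν₁eq δ hδ, hν₁eq δ' hδ']
    have e2 : EO Γ₂ (fun δ => ∑ γ ∈ Γ.filter (fun γ => γ ∩ E₂ = δ), μ γ) = EO Γ₂ μ₂ := by
      unfold EO
      exact Finset.sum_congr rfl fun δ hδ => Finset.sum_congr rfl fun δ' hδ' => by
        dsimp only; rw [hν₂eq δ hδ, hν₂eq δ' hδ']
    exact ⟨μ, hpmf, by rw [hEO, e1, e2]⟩
  -- now conclude
  set S : Set ℝ := {x : ℝ | ∃ μ, IsPmf Γ μ ∧ x = EO Γ μ} with hSdef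
  set S₁ : Set ℝ := {x : ℝ | ∃ μ, IsPmf Γ₁ μ ∧ x = EO Γ₁ μ} with hS₁def
  set S₂ : Set ℝ := {x : ℝ | ∃ μ, IsPmf Γ₂ μ ∧ x = EO Γ₂ μ} with hS₂def
  have hSne : S.Nonempty := aux_meo_set_nonempty Γ hΓ
  have hS₁ne : S₁.Nonempty := aux_meo_set_nonempty Γ₁ hΓ₁ne
  have hS₂ne : S₂.Nonempty := aux_meo_set_nonempty Γ₂ hΓ₂ne
  have hSbdd : BddBelow S := aux_meo_bddBelow Γ
  have hS₁bdd : BddBelow S₁ := aux_meo_bddBelow Γ₁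
  have hS₂bdd : BddBelow S₂ := aux_meo_bddBelow Γ₂
  have hMEO : MEO Γ = sInf S := rfl
  have hMEO₁ : MEO Γ₁ = sInf S₁ := rfl
  have hMEO₂ : MEO Γ₂ = sInf S₂ := rfl
  apply le_antisymm
  · -- MEO Γ ≤ MEO Γ₁ + MEO Γ₂
    have key : ∀ x₁ ∈ S₁, ∀ x₂ ∈ S₂, MEO Γ ≤ x₁ + x₂ := by
      rintro x₁ ⟨μ₁, hμ₁, rfl⟩ x₂ ⟨μ₂, hμ₂, rfl⟩
      obtain ⟨μ, hμ, hEO⟩ := hprod μ₁ μ₂ hμ₁ hμ₂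
      rw [hMEO]
      exact csInf_le hSbdd ⟨μ, hμ, hEO.symm⟩
    have step1 : ∀ x₁ ∈ S₁, MEO Γ - x₁ ≤ sInf S₂ := by
      intro x₁ h₁
      exact le_csInf hS₂ne fun x₂ h₂ => by linarith [key x₁ h₁ x₂ h₂]
    have step2 : MEO Γ - sInf S₂ ≤ sInf S₁ :=
      le_csInf hS₁ne fun x₁ h₁ => by linarith [step1 x₁ h₁]
    rw [hMEO₁, hMEO₂]; linarith
  · -- MEO Γ₁ + MEO Γ₂ ≤ MEO Γ
    rw [hMEO, hMEO₁, hMEO₂]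
    refine le_csInf hSne ?_
    rintro x ⟨μ, hμ, rfl⟩
    obtain ⟨hμ₁, hμ₂, hEO⟩ := hpush μ hμ
    rw [hEO]
    exact add_le_add (csInf_le hS₁bdd ⟨_, hμ₁, rfl⟩) (csInf_le hS₂bdd ⟨_, hμ₂, rfl⟩)
end
end

section
/- Let E be a finite set, Γ a finite nonempty collection of subsets of E, and E = E₁ ⊔ E₂ a partition into two nonempty sets that divides Γ. If ν₁ is a pmf on Γ₁ attaining MEO(Γ₁) and ν₂ is a pmf on Γ₂ attaining MEO(Γ₂), then the product coupling ν on Γ defined by ν(γ) = ν₁(γ ∩ E₁) · ν₂(γ ∩ E₂) is a pmf on Γ that attains MEO(Γ). -/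
noncomputable section
open Finset

namespace MEOAux

variable {E : Type*} [DecidableEq E]

lemma EO_nonneg (Γ : Finset (Finset E)) (μ : Finset E → ℝ) (hμ : ∀ γ, 0 ≤ μ γ) :
    0 ≤ EO Γ μ :=
  Finset.sum_nonneg fun γ _ => Finset.sum_nonneg fun γ' _ =>
    mul_nonneg (mul_nonneg (Nat.cast_nonneg _) (hμ γ)) (hμ γ')

lemma MEO_bdd (Γ : Finset (Finset E)) : BddBelow {x : ℝ | ∃ μ, IsPmf Γ μ ∧ x = EO Γ μ} :=
  ⟨0, fun _ ⟨μ, hμ, hx⟩ => hx ▸ EO_nonneg Γ μ hμ.1⟩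

lemma MEO_le (Γ : Finset (Finset E)) (μ : Finset E → ℝ) (hμ : IsPmf Γ μ) :
    MEO Γ ≤ EO Γ μ :=
  csInf_le (MEO_bdd Γ) ⟨μ, hμ, rfl⟩

lemma EO_congr (Γ : Finset (Finset E)) (μ μ' : Finset E → ℝ) (h : ∀ a ∈ Γ, μ a = μ' a) :
    EO Γ μ = EO Γ μ' :=
  Finset.sum_congr rfl fun a ha => Finset.sum_congr rfl fun b hb => by
    rw [h a ha, h b hb]

/-- The marginal of a pmf on `Γ` along the projection `γ ↦ γ ∩ P` is a pmf. -/
lemma marg_pmf (Γ : Finset (Finset E)) (P : Finset E) (μ : Finset E → ℝ) (hμ : IsPmf Γ μ) :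
    IsPmf (Γ.image (· ∩ P)) (fun a => ∑ γ ∈ Γ.filter (fun γ => γ ∩ P = a), μ γ) := by
  refine ⟨fun a => Finset.sum_nonneg fun γ _ => hμ.1 γ,
    fun a ha => Finset.sum_eq_zero fun γ hγ => ?_, ?_⟩
  · rw [Finset.mem_filter] at hγ
    exact absurd (hγ.2 ▸ Finset.mem_image_of_mem (· ∩ P) hγ.1) ha
  · rw [Finset.sum_fiberwise_of_maps_to (fun γ hγ => Finset.mem_image_of_mem (· ∩ P) hγ)]
    exact hμ.2.2

/-- The `P`-part of the expected overlap equals the expected overlap of the marginal. -/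
lemma marg_EO (Γ : Finset (Finset E)) (P : Finset E) (μ : Finset E → ℝ) :
    ∑ γ ∈ Γ, ∑ γ' ∈ Γ, (((γ ∩ P) ∩ (γ' ∩ P)).card : ℝ) * μ γ * μ γ'
      = EO (Γ.image (· ∩ P)) (fun a => ∑ γ ∈ Γ.filter (fun γ => γ ∩ P = a), μ γ) := by
  have hmap : ∀ γ ∈ Γ, γ ∩ P ∈ Γ.image (· ∩ P) :=
    fun γ hγ => Finset.mem_image_of_mem (· ∩ P) hγ
  rw [EO, ← Finset.sum_fiberwise_of_maps_to hmap
    (fun γ => ∑ γ' ∈ Γ, (((γ ∩ P) ∩ (γ' ∩ P)).card : ℝ) * μ γ * μ γ')]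
  refine Finset.sum_congr rfl fun a _ => ?_
  have hstep : ∀ γ ∈ Γ.filter (fun γ => γ ∩ P = a),
      (∑ γ' ∈ Γ, (((γ ∩ P) ∩ (γ' ∩ P)).card : ℝ) * μ γ * μ γ')
        = ∑ a' ∈ Γ.image (· ∩ P), ((a ∩ a').card : ℝ) * μ γ *
            (∑ γ' ∈ Γ.filter (fun γ' => γ' ∩ P = a'), μ γ') := by
    intro γ hγ
    rw [Finset.mem_filter] at hγ
    rw [← Finset.sum_fiberwise_of_maps_to hmap
      (fun γ' => (((γ ∩ P) ∩ (γ' ∩ P)).card : ℝ) * μ γ * μ γ')]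
    refine Finset.sum_congr rfl fun a' _ => ?_
    rw [Finset.mul_sum]
    refine Finset.sum_congr rfl fun γ' hγ' => ?_
    rw [Finset.mem_filter] at hγ'
    rw [hγ.2, hγ'.2]
  rw [Finset.sum_congr rfl hstep, Finset.sum_comm]
  refine Finset.sum_congr rfl fun a' _ => ?_
  rw [← Finset.sum_mul, ← Finset.mul_sum]

/-- Fiber sum of a product coupling. -/
lemma fiber_prod (Γ : Finset (Finset E)) (E₁ E₂ : Finset E) (ν₁ ν₂ : Finset E → ℝ)
    (hmem : ∀ a ∈ Γ.image (· ∩ E₁), ∀ b ∈ Γ.image (· ∩ E₂), a ∪ b ∈ Γ)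
    (hre : ∀ a ∈ Γ.image (· ∩ E₁), ∀ b ∈ Γ.image (· ∩ E₂),
      (a ∪ b) ∩ E₁ = a ∧ (a ∪ b) ∩ E₂ = b)
    (hsplit : ∀ γ, (γ ∩ E₁) ∪ (γ ∩ E₂) = γ)
    (hsum2 : ∑ b ∈ Γ.image (· ∩ E₂), ν₂ b = 1)
    {a : Finset E} (ha : a ∈ Γ.image (· ∩ E₁)) :
    ∑ γ ∈ Γ.filter (fun γ => γ ∩ E₁ = a), ν₁ (γ ∩ E₁) * ν₂ (γ ∩ E₂) = ν₁ a := by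
  have key : ∑ γ ∈ Γ.filter (fun γ => γ ∩ E₁ = a), ν₁ (γ ∩ E₁) * ν₂ (γ ∩ E₂)
      = ∑ b ∈ Γ.image (· ∩ E₂), ν₁ a * ν₂ b := by
    refine Finset.sum_nbij' (i := fun γ => γ ∩ E₂) (j := fun b => a ∪ b) ?_ ?_ ?_ ?_ ?_
    · intro γ hγ
      rw [Finset.mem_filter] at hγ
      exact Finset.mem_image_of_mem (· ∩ E₂) hγ.1
    · intro b hb
      rw [Finset.mem_filter]
      exact ⟨hmem a ha b hb, (hre a ha b hb).1⟩
    · intro γ hγ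
      rw [Finset.mem_filter] at hγ
      show a ∪ γ ∩ E₂ = γ
      rw [← hγ.2]
      exact hsplit γ
    · intro b hb
      exact (hre a ha b hb).2
    · intro γ hγ
      rw [Finset.mem_filter] at hγ
      show ν₁ (γ ∩ E₁) * ν₂ (γ ∩ E₂) = ν₁ a * ν₂ (γ ∩ E₂)
      rw [hγ.2]
  rw [key, ← Finset.mul_sum, hsum2, mul_one]

end MEOAux

open MEOAux in
/-- the product coupling of optimal pmfs on `Γ₁` and `Γ₂` is an
optimal pmf on `Γ`, when the partition divides `Γ`. -/
theorem product_coupling_optimal {E : Type*} [Fintype E] [DecidableEq E]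
    (Γ : Finset (Finset E)) (hΓ : Γ.Nonempty)
    (E₁ E₂ : Finset E) (hE₁ : E₁.Nonempty) (hE₂ : E₂.Nonempty)
    (hdisj : Disjoint E₁ E₂) (hcover : E₁ ∪ E₂ = Finset.univ)
    (hdiv : Γ = Finset.image₂ (· ∪ ·) (Γ.image (· ∩ E₁)) (Γ.image (· ∩ E₂)))
    (ν₁ ν₂ : Finset E → ℝ)
    (hν₁ : IsPmf (Γ.image (· ∩ E₁)) ν₁) (hopt₁ : EO (Γ.image (· ∩ E₁)) ν₁ = MEO (Γ.image (· ∩ E₁)))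
    (hν₂ : IsPmf (Γ.image (· ∩ E₂)) ν₂) (hopt₂ : EO (Γ.image (· ∩ E₂)) ν₂ = MEO (Γ.image (· ∩ E₂))) :
    IsPmf Γ (fun γ => ν₁ (γ ∩ E₁) * ν₂ (γ ∩ E₂)) ∧
      EO Γ (fun γ => ν₁ (γ ∩ E₁) * ν₂ (γ ∩ E₂)) = MEO Γ := by
  set Γ₁ := Γ.image (· ∩ E₁) with hΓ₁
  set Γ₂ := Γ.image (· ∩ E₂) with hΓ₂
  -- basic structural facts
  have hsub₁ : ∀ a ∈ Γ₁, a ⊆ E₁ := by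
    intro a ha
    obtain ⟨γ, _, rfl⟩ := Finset.mem_image.mp ha
    exact Finset.inter_subset_right
  have hsub₂ : ∀ b ∈ Γ₂, b ⊆ E₂ := by
    intro b hb
    obtain ⟨γ, _, rfl⟩ := Finset.mem_image.mp hb
    exact Finset.inter_subset_right
  have hre : ∀ a ∈ Γ₁, ∀ b ∈ Γ₂, (a ∪ b) ∩ E₁ = a ∧ (a ∪ b) ∩ E₂ = b := by
    intro a ha b hb
    have ha' := hsub₁ a ha
    have hb' := hsub₂ b hb
    constructor
    · rw [Finset.union_inter_distrib_right, Finset.inter_eq_left.mpr ha',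
        Finset.disjoint_iff_inter_eq_empty.mp (hdisj.symm.mono_left hb'), Finset.union_empty]
    · rw [Finset.union_inter_distrib_right, Finset.inter_eq_left.mpr hb',
        Finset.disjoint_iff_inter_eq_empty.mp (hdisj.mono_left ha'), Finset.empty_union]
  have hsplit : ∀ γ : Finset E, (γ ∩ E₁) ∪ (γ ∩ E₂) = γ := by
    intro γ
    rw [← Finset.inter_union_distrib_left, hcover, Finset.inter_univ]
  have hmem : ∀ a ∈ Γ₁, ∀ b ∈ Γ₂, a ∪ b ∈ Γ := by
    intro a ha b hb
    rw [hdiv]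
    exact Finset.mem_image₂_of_mem ha hb
  have hmem' : ∀ b ∈ Γ₂, ∀ a ∈ Γ₁, b ∪ a ∈ Γ := by
    intro b hb a ha
    rw [Finset.union_comm]
    exact hmem a ha b hb
  have hre' : ∀ b ∈ Γ₂, ∀ a ∈ Γ₁, (b ∪ a) ∩ E₂ = b ∧ (b ∪ a) ∩ E₁ = a := by
    intro b hb a ha
    rw [Finset.union_comm]
    exact ⟨(hre a ha b hb).2, (hre a ha b hb).1⟩
  have hsplit' : ∀ γ : Finset E, (γ ∩ E₂) ∪ (γ ∩ E₁) = γ := by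
    intro γ
    rw [Finset.union_comm]
    exact hsplit γ
  -- the coupling
  set ν : Finset E → ℝ := fun γ => ν₁ (γ ∩ E₁) * ν₂ (γ ∩ E₂) with hν
  -- ν is a pmf
  have hνpmf : IsPmf Γ ν := by
    refine ⟨fun γ => mul_nonneg (hν₁.1 _) (hν₂.1 _), ?_, ?_⟩
    · intro γ hγ
      by_cases h1 : γ ∩ E₁ ∈ Γ₁
      · by_cases h2 : γ ∩ E₂ ∈ Γ₂
        · exact absurd (hsplit γ ▸ hmem _ h1 _ h2) hγ
        · simp only [hν, hν₂.2.1 _ h2, mul_zero]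
      · simp only [hν, hν₁.2.1 _ h1, zero_mul]
    · have : ∑ γ ∈ Γ, ν γ = ∑ p ∈ Γ₁ ×ˢ Γ₂, ν₁ p.1 * ν₂ p.2 := by
        refine (Finset.sum_nbij' (i := fun p : Finset E × Finset E => p.1 ∪ p.2)
          (j := fun γ => (γ ∩ E₁, γ ∩ E₂)) ?_ ?_ ?_ ?_ ?_).symm
        · rintro ⟨a, b⟩ hp
          rw [Finset.mem_product] at hp
          exact hmem a hp.1 b hp.2
        · intro γ hγ
          rw [Finset.mem_product]
          exact ⟨Finset.mem_image_of_mem (· ∩ E₁) hγ, Finset.mem_image_of_mem (· ∩ E₂) hγ⟩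
        · rintro ⟨a, b⟩ hp
          rw [Finset.mem_product] at hp
          show ((a ∪ b) ∩ E₁, (a ∪ b) ∩ E₂) = (a, b)
          rw [(hre a hp.1 b hp.2).1, (hre a hp.1 b hp.2).2]
        · intro γ hγ
          exact hsplit γ
        · rintro ⟨a, b⟩ hp
          rw [Finset.mem_product] at hp
          simp only [hν, (hre a hp.1 b hp.2).1, (hre a hp.1 b hp.2).2]
      rw [this, Finset.sum_product]
      simp only [← Finset.mul_sum, hν₂.2.2, mul_one]
      exact hν₁.2.2
  -- overlap decomposition
  have hcard : ∀ γ γ' : Finset E, ((γ ∩ γ').card : ℝ)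
      = (((γ ∩ E₁) ∩ (γ' ∩ E₁)).card : ℝ) + (((γ ∩ E₂) ∩ (γ' ∩ E₂)).card : ℝ) := by
    intro γ γ'
    have e1 : (γ ∩ E₁) ∩ (γ' ∩ E₁) = (γ ∩ γ') ∩ E₁ := by
      ext x; simp only [Finset.mem_inter]; tauto
    have e2 : (γ ∩ E₂) ∩ (γ' ∩ E₂) = (γ ∩ γ') ∩ E₂ := by
      ext x; simp only [Finset.mem_inter]; tauto
    have hd : Disjoint ((γ ∩ γ') ∩ E₁) ((γ ∩ γ') ∩ E₂) :=
      hdisj.mono Finset.inter_subset_right Finset.inter_subset_right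
    rw [e1, e2, ← Nat.cast_add, ← Finset.card_union_of_disjoint hd, hsplit (γ ∩ γ')]
  have hEOdec : ∀ μ : Finset E → ℝ, EO Γ μ
      = EO Γ₁ (fun a => ∑ γ ∈ Γ.filter (fun γ => γ ∩ E₁ = a), μ γ)
      + EO Γ₂ (fun b => ∑ γ ∈ Γ.filter (fun γ => γ ∩ E₂ = b), μ γ) := by
    intro μ
    rw [← marg_EO Γ E₁ μ, ← marg_EO Γ E₂ μ, EO, ← Finset.sum_add_distrib]
    refine Finset.sum_congr rfl fun γ _ => ?_
    rw [← Finset.sum_add_distrib]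
    refine Finset.sum_congr rfl fun γ' _ => ?_
    rw [hcard γ γ']
    ring
  -- marginals of ν are ν₁ and ν₂
  have hmarg₁ : ∀ a ∈ Γ₁, (∑ γ ∈ Γ.filter (fun γ => γ ∩ E₁ = a), ν γ) = ν₁ a := by
    intro a ha
    exact fiber_prod Γ E₁ E₂ ν₁ ν₂ hmem hre hsplit hν₂.2.2 ha
  have hmarg₂ : ∀ b ∈ Γ₂, (∑ γ ∈ Γ.filter (fun γ => γ ∩ E₂ = b), ν γ) = ν₂ b := by
    intro b hb
    have := fiber_prod Γ E₂ E₁ ν₂ ν₁ hmem' hre' hsplit' hν₁.2.2 hb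
    rw [← this]
    refine Finset.sum_congr rfl fun γ _ => ?_
    rw [hν, mul_comm]
  -- EO of ν equals MEO Γ₁ + MEO Γ₂
  have hEOν : EO Γ ν = MEO Γ₁ + MEO Γ₂ := by
    rw [hEOdec ν, EO_congr Γ₁ _ ν₁ hmarg₁, EO_congr Γ₂ _ ν₂ hmarg₂, hopt₁, hopt₂]
  -- lower bound for all pmfs
  have hlow : ∀ μ : Finset E → ℝ, IsPmf Γ μ → MEO Γ₁ + MEO Γ₂ ≤ EO Γ μ := by
    intro μ hμ
    rw [hEOdec μ]
    exact add_le_add (MEO_le Γ₁ _ (marg_pmf Γ E₁ μ hμ)) (MEO_le Γ₂ _ (marg_pmf Γ E₂ μ hμ))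
  refine ⟨hνpmf, le_antisymm ?_ (MEO_le Γ ν hνpmf)⟩
  refine le_csInf ⟨EO Γ ν, ν, hνpmf, rfl⟩ ?_
  rintro x ⟨μ, hμ, rfl⟩
  rw [hEOν]
  exact hlow μ hμ
end
end

section
/- Let E be a finite set, Γ a finite nonempty collection of subsets of E, and E = E₁ ⊔ E₂ a partition into two nonempty sets such that every γ ∈ Γ meets both E₁ and E₂. Then Mod₂(Γ)⁻¹ ≥ Mod₂(Γ₁)⁻¹ + Mod₂(Γ₂)⁻¹, where Γᵢ = {γ ∩ Eᵢ : γ ∈ Γ}; moreover equality holds if the partition divides Γ. -/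
noncomputable section
open Finset

/-- A density `ρ` is admissible for the family `Γ`: nonnegative, and every
member of `Γ` has total `ρ`-cost at least one. -/
def Adm {E : Type*} [DecidableEq E] (Γ : Finset (Finset E)) (ρ : E → ℝ) : Prop :=
  (∀ e, 0 ≤ ρ e) ∧ ∀ γ ∈ Γ, 1 ≤ ∑ e ∈ γ, ρ e

/-- The 2-modulus of `Γ`: the infimum of the energy `∑_{e∈E} ρ(e)²` over
admissible densities. -/
def Mod2 {E : Type*} [Fintype E] [DecidableEq E] (Γ : Finset (Finset E)) : ℝ :=
  sInf {x : ℝ | ∃ ρ, Adm Γ ρ ∧ x = ∑ e : E, (ρ e) ^ 2}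

section Aux

variable {E : Type*} [Fintype E] [DecidableEq E]

def modSet (Γ : Finset (Finset E)) : Set ℝ :=
  {x : ℝ | ∃ ρ, Adm Γ ρ ∧ x = ∑ e : E, (ρ e) ^ 2}

lemma modSet_bddBelow (Γ : Finset (Finset E)) : BddBelow (modSet Γ) := by
  refine ⟨0, fun x hx => ?_⟩
  obtain ⟨ρ, _, rfl⟩ := hx
  positivity

lemma modSet_nonempty (Γ : Finset (Finset E)) (h : ∀ γ ∈ Γ, γ.Nonempty) :
    (modSet Γ).Nonempty := by
  refine ⟨∑ e : E, ((1 : ℝ)) ^ 2, fun _ => 1, ⟨fun e => zero_le_one, fun γ hγ => ?_⟩, rfl⟩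
  have := (h γ hγ).card_pos
  simp only [Finset.sum_const, nsmul_eq_mul, mul_one]
  exact_mod_cast this

lemma mod2_le_of_adm {Γ : Finset (Finset E)} {ρ : E → ℝ} (h : Adm Γ ρ) :
    Mod2 Γ ≤ ∑ e : E, (ρ e) ^ 2 :=
  csInf_le (modSet_bddBelow Γ) ⟨ρ, h, rfl⟩

lemma mod2_ge (Γ : Finset (Finset E)) (hΓ : Γ.Nonempty) (h : ∀ γ ∈ Γ, γ.Nonempty) :
    ((Fintype.card E : ℝ))⁻¹ ≤ Mod2 Γ := by
  refine le_csInf (modSet_nonempty Γ h) ?_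
  rintro x ⟨ρ, ⟨hnn, hadm⟩, rfl⟩
  obtain ⟨γ, hγ⟩ := hΓ
  have h1 : (1 : ℝ) ≤ ∑ e ∈ γ, ρ e := hadm γ hγ
  have h2 : (∑ e ∈ γ, ρ e) ^ 2 ≤ (γ.card : ℝ) * ∑ e ∈ γ, (ρ e) ^ 2 := by
    exact_mod_cast sq_sum_le_card_mul_sum_sq (s := γ) (f := ρ)
  have h3 : ∑ e ∈ γ, (ρ e) ^ 2 ≤ ∑ e : E, (ρ e) ^ 2 :=
    Finset.sum_le_sum_of_subset_of_nonneg (Finset.subset_univ γ)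
      (fun e _ _ => by positivity)
  have hcard : (γ.card : ℝ) ≤ (Fintype.card E : ℝ) := by
    exact_mod_cast Finset.card_le_card (Finset.subset_univ γ)
  have hE : (0 : ℝ) < (Fintype.card E : ℝ) := by
    have : 0 < γ.card := (h γ hγ).card_pos
    have : 0 < Fintype.card E := lt_of_lt_of_le this
      (Finset.card_le_card (Finset.subset_univ γ))
    exact_mod_cast this
  rw [inv_le_iff_one_le_mul₀ hE]
  have hx : (0 : ℝ) ≤ ∑ e : E, (ρ e) ^ 2 := by positivity
  nlinarith [sq_nonneg (∑ e ∈ γ, ρ e)]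

lemma mod2_pos (Γ : Finset (Finset E)) (hΓ : Γ.Nonempty) (h : ∀ γ ∈ Γ, γ.Nonempty) :
    0 < Mod2 Γ := by
  obtain ⟨γ, hγ⟩ := hΓ
  have : 0 < Fintype.card E := by
    obtain ⟨e, _⟩ := h γ hγ
    exact Fintype.card_pos_iff.mpr ⟨e⟩
  calc (0 : ℝ) < ((Fintype.card E : ℝ))⁻¹ := by positivity
    _ ≤ Mod2 Γ := mod2_ge Γ ⟨γ, hγ⟩ h

/-- Combination lemma: convex combinations of admissible densities. -/
lemma mod2_combine (Γ Γ₁ Γ₂ : Finset (Finset E)) (E₁ E₂ : Finset E)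
    (hdisj : Disjoint E₁ E₂) (hcover : E₁ ∪ E₂ = Finset.univ)
    (h1 : ∀ γ ∈ Γ, γ ∩ E₁ ∈ Γ₁) (h2 : ∀ γ ∈ Γ, γ ∩ E₂ ∈ Γ₂)
    (hne1 : ∀ γ ∈ Γ₁, Finset.Nonempty γ) (hne2 : ∀ γ ∈ Γ₂, Finset.Nonempty γ)
    (l₁ l₂ : ℝ) (hl₁ : 0 ≤ l₁) (hl₂ : 0 ≤ l₂) (hl : l₁ + l₂ = 1) :
    Mod2 Γ ≤ l₁ ^ 2 * Mod2 Γ₁ + l₂ ^ 2 * Mod2 Γ₂ := by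
  refine le_of_forall_pos_le_add fun ε hε => ?_
  obtain ⟨x₁, hx₁mem, hx₁⟩ := Real.lt_sInf_add_pos (modSet_nonempty Γ₁ hne1) (half_pos hε)
  obtain ⟨x₂, hx₂mem, hx₂⟩ := Real.lt_sInf_add_pos (modSet_nonempty Γ₂ hne2) (half_pos hε)
  obtain ⟨ρ₁, ⟨hnn₁, had₁⟩, rfl⟩ := hx₁mem
  obtain ⟨ρ₂, ⟨hnn₂, had₂⟩, rfl⟩ := hx₂mem
  set ρ : E → ℝ := fun e => if e ∈ E₁ then l₁ * ρ₁ e else l₂ * ρ₂ e with hρ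
  have hmem2 : ∀ e : E, e ∈ E₂ ↔ e ∉ E₁ := by
    intro e
    constructor
    · intro h2 h1' ; exact (Finset.disjoint_left.mp hdisj) h1' h2
    · intro h1'
      have : e ∈ E₁ ∪ E₂ := by rw [hcover]; exact Finset.mem_univ e
      rcases Finset.mem_union.mp this with h | h
      · exact absurd h h1'
      · exact h
  have hadm : Adm Γ ρ := by
    constructor
    · intro e
      by_cases he : e ∈ E₁ <;> simp only [hρ, he, if_true, if_false]
      · exact mul_nonneg hl₁ (hnn₁ e)
      · exact mul_nonneg hl₂ (hnn₂ e)
    · intro γ hγ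
      have hsplit : ∑ e ∈ γ, ρ e = ∑ e ∈ γ ∩ E₁, ρ e + ∑ e ∈ γ ∩ E₂, ρ e := by
        rw [← Finset.sum_union]
        · congr 1
          rw [← Finset.inter_union_distrib_left, hcover, Finset.inter_univ]
        · exact hdisj.mono Finset.inter_subset_right Finset.inter_subset_right
      have hs1 : ∑ e ∈ γ ∩ E₁, ρ e = l₁ * ∑ e ∈ γ ∩ E₁, ρ₁ e := by
        rw [Finset.mul_sum]
        refine Finset.sum_congr rfl fun e he => ?_
        have : e ∈ E₁ := (Finset.mem_inter.mp he).2
        simp [hρ, this]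
      have hs2 : ∑ e ∈ γ ∩ E₂, ρ e = l₂ * ∑ e ∈ γ ∩ E₂, ρ₂ e := by
        rw [Finset.mul_sum]
        refine Finset.sum_congr rfl fun e he => ?_
        have h2' : e ∈ E₂ := (Finset.mem_inter.mp he).2
        have : e ∉ E₁ := (hmem2 e).mp h2'
        simp [hρ, this]
      have hb1 : (1 : ℝ) ≤ ∑ e ∈ γ ∩ E₁, ρ₁ e := had₁ _ (h1 γ hγ)
      have hb2 : (1 : ℝ) ≤ ∑ e ∈ γ ∩ E₂, ρ₂ e := had₂ _ (h2 γ hγ)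
      rw [hsplit, hs1, hs2]
      calc (1 : ℝ) = l₁ * 1 + l₂ * 1 := by rw [mul_one, mul_one, hl]
        _ ≤ l₁ * ∑ e ∈ γ ∩ E₁, ρ₁ e + l₂ * ∑ e ∈ γ ∩ E₂, ρ₂ e := by
            gcongr
  have henergy : ∑ e : E, (ρ e) ^ 2 ≤
      l₁ ^ 2 * ∑ e : E, (ρ₁ e) ^ 2 + l₂ ^ 2 * ∑ e : E, (ρ₂ e) ^ 2 := by
    have : ∑ e : E, (ρ e) ^ 2 = ∑ e ∈ E₁, (ρ e) ^ 2 + ∑ e ∈ E₂, (ρ e) ^ 2 := by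
      rw [← Finset.sum_union hdisj, hcover]
    rw [this]
    have e1 : ∑ e ∈ E₁, (ρ e) ^ 2 = l₁ ^ 2 * ∑ e ∈ E₁, (ρ₁ e) ^ 2 := by
      rw [Finset.mul_sum]
      refine Finset.sum_congr rfl fun e he => ?_
      simp [hρ, he, mul_pow]
    have e2 : ∑ e ∈ E₂, (ρ e) ^ 2 = l₂ ^ 2 * ∑ e ∈ E₂, (ρ₂ e) ^ 2 := by
      rw [Finset.mul_sum]
      refine Finset.sum_congr rfl fun e he => ?_
      have : e ∉ E₁ := (hmem2 e).mp he
      simp [hρ, this, mul_pow]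
    rw [e1, e2]
    have b1 : ∑ e ∈ E₁, (ρ₁ e) ^ 2 ≤ ∑ e : E, (ρ₁ e) ^ 2 :=
      Finset.sum_le_sum_of_subset_of_nonneg (Finset.subset_univ _) (fun e _ _ => by positivity)
    have b2 : ∑ e ∈ E₂, (ρ₂ e) ^ 2 ≤ ∑ e : E, (ρ₂ e) ^ 2 :=
      Finset.sum_le_sum_of_subset_of_nonneg (Finset.subset_univ _) (fun e _ _ => by positivity)
    have p1 : (0:ℝ) ≤ l₁ ^ 2 := by positivity
    have p2 : (0:ℝ) ≤ l₂ ^ 2 := by positivity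
    exact add_le_add (mul_le_mul_of_nonneg_left b1 p1) (mul_le_mul_of_nonneg_left b2 p2)
  have hsq : l₁ ^ 2 + l₂ ^ 2 ≤ 1 := by nlinarith
  calc Mod2 Γ ≤ ∑ e : E, (ρ e) ^ 2 := mod2_le_of_adm hadm
    _ ≤ l₁ ^ 2 * ∑ e : E, (ρ₁ e) ^ 2 + l₂ ^ 2 * ∑ e : E, (ρ₂ e) ^ 2 := henergy
    _ ≤ l₁ ^ 2 * (Mod2 Γ₁ + ε / 2) + l₂ ^ 2 * (Mod2 Γ₂ + ε / 2) := by
        gcongr <;> [exact le_of_lt hx₁; exact le_of_lt hx₂]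
    _ = l₁ ^ 2 * Mod2 Γ₁ + l₂ ^ 2 * Mod2 Γ₂ + (l₁ ^ 2 + l₂ ^ 2) * (ε / 2) := by ring
    _ ≤ l₁ ^ 2 * Mod2 Γ₁ + l₂ ^ 2 * Mod2 Γ₂ + ε := by
        have : (l₁ ^ 2 + l₂ ^ 2) * (ε / 2) ≤ 1 * (ε / 2) := by
          apply mul_le_mul_of_nonneg_right hsq (by linarith)
        linarith

lemma sum_sq_pos_of_sum_pos {E : Type*} [DecidableEq E] {E' γ : Finset E}
    (hγ : γ ⊆ E') {ρ : E → ℝ} (hnn : ∀ e, 0 ≤ ρ e)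
    (ht : 0 < ∑ e ∈ γ, ρ e) : 0 < ∑ e ∈ E', (ρ e) ^ 2 := by
  by_contra h
  push_neg at h
  have hz : ∑ e ∈ E', (ρ e) ^ 2 = 0 := le_antisymm h (by positivity)
  have hall : ∀ e ∈ E', (ρ e) ^ 2 = 0 :=
    (Finset.sum_eq_zero_iff_of_nonneg (fun e _ => by positivity)).mp hz
  have : ∑ e ∈ γ, ρ e = 0 := Finset.sum_eq_zero fun e he =>
    pow_eq_zero_iff (n := 2) (by norm_num) |>.mp (hall e (hγ he))
  linarith

lemma mod2_restrict (Γ' : Finset (Finset E)) (E' : Finset E)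
    (hsub : ∀ γ ∈ Γ', γ ⊆ E') (ρ : E → ℝ) (hnn : ∀ e, 0 ≤ ρ e)
    (t : ℝ) (ht : 0 < t) (hmin : ∀ γ ∈ Γ', t ≤ ∑ e ∈ γ, ρ e) :
    Mod2 Γ' ≤ (∑ e ∈ E', (ρ e) ^ 2) / t ^ 2 := by
  set ρ' : E → ℝ := fun e => if e ∈ E' then ρ e / t else 0 with hρ'
  have hadm : Adm Γ' ρ' := by
    constructor
    · intro e
      by_cases he : e ∈ E' <;> simp only [hρ', he, if_true, if_false]
      · exact div_nonneg (hnn e) ht.le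
      · exact le_refl 0
    · intro γ hγ
      have : ∑ e ∈ γ, ρ' e = (∑ e ∈ γ, ρ e) / t := by
        rw [Finset.sum_div]
        refine Finset.sum_congr rfl fun e he => ?_
        simp [hρ', hsub γ hγ he]
      rw [this, le_div_iff₀ ht, one_mul]
      exact hmin γ hγ
  have henergy : ∑ e : E, (ρ' e) ^ 2 = (∑ e ∈ E', (ρ e) ^ 2) / t ^ 2 := by
    have : ∀ e : E, (ρ' e) ^ 2 = if e ∈ E' then (ρ e) ^ 2 / t ^ 2 else 0 := by
      intro e
      by_cases he : e ∈ E' <;> simp [hρ', he, div_pow]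
    rw [Finset.sum_congr rfl (fun e _ => this e), Finset.sum_ite_mem,
      Finset.univ_inter, Finset.sum_div]
  rw [← henergy]
  exact mod2_le_of_adm hadm

lemma mod2_divide (Γ Γ₁ Γ₂ : Finset (Finset E)) (E₁ E₂ : Finset E)
    (hdisj : Disjoint E₁ E₂) (hcover : E₁ ∪ E₂ = Finset.univ)
    (hΓ₁ : Γ₁.Nonempty) (hΓ₂ : Γ₂.Nonempty)
    (hsub1 : ∀ γ ∈ Γ₁, γ ⊆ E₁) (hsub2 : ∀ γ ∈ Γ₂, γ ⊆ E₂)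
    (hM₁ : 0 < Mod2 Γ₁) (hM₂ : 0 < Mod2 Γ₂)
    (hdiv : ∀ γ₁ ∈ Γ₁, ∀ γ₂ ∈ Γ₂, γ₁ ∪ γ₂ ∈ Γ)
    (hΓne : ∀ γ ∈ Γ, Finset.Nonempty γ) :
    ((Mod2 Γ₁)⁻¹ + (Mod2 Γ₂)⁻¹)⁻¹ ≤ Mod2 Γ := by
  refine le_csInf (modSet_nonempty Γ hΓne) ?_
  rintro x ⟨ρ, ⟨hnn, hadm⟩, rfl⟩
  obtain ⟨γ₁, hγ₁, hmin₁⟩ := Finset.exists_min_image Γ₁ (fun γ => ∑ e ∈ γ, ρ e) hΓ₁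
  obtain ⟨γ₂, hγ₂, hmin₂⟩ := Finset.exists_min_image Γ₂ (fun γ => ∑ e ∈ γ, ρ e) hΓ₂
  set t₁ := ∑ e ∈ γ₁, ρ e with ht₁def
  set t₂ := ∑ e ∈ γ₂, ρ e with ht₂def
  have ht₁0 : 0 ≤ t₁ := Finset.sum_nonneg fun e _ => hnn e
  have ht₂0 : 0 ≤ t₂ := Finset.sum_nonneg fun e _ => hnn e
  have htsum : 1 ≤ t₁ + t₂ := by
    have hmem := hdiv γ₁ hγ₁ γ₂ hγ₂
    have hd : Disjoint γ₁ γ₂ := hdisj.mono (hsub1 _ hγ₁) (hsub2 _ hγ₂)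
    have := hadm _ hmem
    rwa [Finset.sum_union hd] at this
  set A₁ := ∑ e ∈ E₁, (ρ e) ^ 2 with hA₁def
  set A₂ := ∑ e ∈ E₂, (ρ e) ^ 2 with hA₂def
  have hx : ∑ e : E, (ρ e) ^ 2 = A₁ + A₂ := by
    rw [hA₁def, hA₂def, ← Finset.sum_union hdisj, hcover]
  have hA₁0 : 0 ≤ A₁ := Finset.sum_nonneg fun e _ => by positivity
  have hA₂0 : 0 ≤ A₂ := Finset.sum_nonneg fun e _ => by positivity
  have key₁ : 0 < t₁ → 0 < A₁ ∧ t₁ ^ 2 / A₁ ≤ (Mod2 Γ₁)⁻¹ := by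
    intro ht
    have hA : 0 < A₁ := sum_sq_pos_of_sum_pos (hsub1 _ hγ₁) hnn ht
    refine ⟨hA, ?_⟩
    have hle := mod2_restrict Γ₁ E₁ hsub1 ρ hnn t₁ ht hmin₁
    have h1 : Mod2 Γ₁ * t₁ ^ 2 ≤ A₁ :=
      (le_div_iff₀ (by positivity : (0:ℝ) < t₁ ^ 2)).mp hle
    rw [div_le_iff₀ hA, inv_mul_eq_div, le_div_iff₀ hM₁]
    nlinarith
  have key₂ : 0 < t₂ → 0 < A₂ ∧ t₂ ^ 2 / A₂ ≤ (Mod2 Γ₂)⁻¹ := by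
    intro ht
    have hA : 0 < A₂ := sum_sq_pos_of_sum_pos (hsub2 _ hγ₂) hnn ht
    refine ⟨hA, ?_⟩
    have hle := mod2_restrict Γ₂ E₂ hsub2 ρ hnn t₂ ht hmin₂
    have h1 : Mod2 Γ₂ * t₂ ^ 2 ≤ A₂ :=
      (le_div_iff₀ (by positivity : (0:ℝ) < t₂ ^ 2)).mp hle
    rw [div_le_iff₀ hA, inv_mul_eq_div, le_div_iff₀ hM₂]
    nlinarith
  suffices hsuff : (A₁ + A₂)⁻¹ ≤ (Mod2 Γ₁)⁻¹ + (Mod2 Γ₂)⁻¹ ∧ 0 < A₁ + A₂ by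
    rw [hx]
    calc ((Mod2 Γ₁)⁻¹ + (Mod2 Γ₂)⁻¹)⁻¹ ≤ ((A₁ + A₂)⁻¹)⁻¹ :=
          inv_anti₀ (inv_pos.mpr hsuff.2) hsuff.1
      _ = A₁ + A₂ := inv_inv _
  rcases ht₁0.lt_or_eq with ht₁ | ht₁
  · rcases ht₂0.lt_or_eq with ht₂ | ht₂
    · obtain ⟨hA₁, hk₁⟩ := key₁ ht₁
      obtain ⟨hA₂, hk₂⟩ := key₂ ht₂
      refine ⟨?_, by linarith⟩
      have engel : (t₁ + t₂) ^ 2 / (A₁ + A₂) ≤ t₁ ^ 2 / A₁ + t₂ ^ 2 / A₂ := by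
        rw [div_add_div _ _ (ne_of_gt hA₁) (ne_of_gt hA₂),
          div_le_div_iff₀ (by linarith) (by positivity)]
        nlinarith [sq_nonneg (t₁ * A₂ - t₂ * A₁)]
      have h1 : (A₁ + A₂)⁻¹ ≤ (t₁ + t₂) ^ 2 / (A₁ + A₂) := by
        rw [inv_eq_one_div]
        exact (div_le_div_iff_of_pos_right (by linarith)).mpr (by nlinarith)
      linarith
    · -- t₂ = 0, so 1 ≤ t₁
      obtain ⟨hA₁, hk₁⟩ := key₁ ht₁
      refine ⟨?_, by linarith⟩
      have ht₁1 : 1 ≤ t₁ := by linarith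
      have h1 : (A₁ + A₂)⁻¹ ≤ A₁⁻¹ := by
        have := one_div_le_one_div_of_le hA₁ (by linarith : A₁ ≤ A₁ + A₂)
        rwa [one_div, one_div] at this
      have h2 : A₁⁻¹ ≤ t₁ ^ 2 / A₁ := by
        rw [inv_eq_one_div]
        exact (div_le_div_iff_of_pos_right hA₁).mpr (by nlinarith)
      have h3 : (0:ℝ) ≤ (Mod2 Γ₂)⁻¹ := by positivity
      linarith
  · -- t₁ = 0, so 1 ≤ t₂
    have ht₂1 : 1 ≤ t₂ := by linarith
    obtain ⟨hA₂, hk₂⟩ := key₂ (by linarith)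
    refine ⟨?_, by linarith⟩
    have h1 : (A₁ + A₂)⁻¹ ≤ A₂⁻¹ := by
      have := one_div_le_one_div_of_le hA₂ (by linarith : A₂ ≤ A₁ + A₂)
      rwa [one_div, one_div] at this
    have h2 : A₂⁻¹ ≤ t₂ ^ 2 / A₂ := by
      rw [inv_eq_one_div]
      exact (div_le_div_iff_of_pos_right hA₂).mpr (by nlinarith)
    have h3 : (0:ℝ) ≤ (Mod2 Γ₁)⁻¹ := by positivity
    linarith

end Aux

/-- `Mod₂(Γ)⁻¹ ≥ Mod₂(Γ₁)⁻¹ + Mod₂(Γ₂)⁻¹` whenever every `γ ∈ Γ`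
meets both parts of the partition, with equality if the partition divides `Γ`. -/
theorem mod2_serial_bound {E : Type*} [Fintype E] [DecidableEq E]
    (Γ : Finset (Finset E)) (hΓ : Γ.Nonempty)
    (E₁ E₂ : Finset E) (hE₁ : E₁.Nonempty) (hE₂ : E₂.Nonempty)
    (hdisj : Disjoint E₁ E₂) (hcover : E₁ ∪ E₂ = Finset.univ)
    (hmeets : ∀ γ ∈ Γ, (γ ∩ E₁).Nonempty ∧ (γ ∩ E₂).Nonempty) :
    (Mod2 (Γ.image (· ∩ E₁)))⁻¹ + (Mod2 (Γ.image (· ∩ E₂)))⁻¹ ≤ (Mod2 Γ)⁻¹ ∧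
    (Γ = Finset.image₂ (· ∪ ·) (Γ.image (· ∩ E₁)) (Γ.image (· ∩ E₂)) →
      (Mod2 Γ)⁻¹ = (Mod2 (Γ.image (· ∩ E₁)))⁻¹ + (Mod2 (Γ.image (· ∩ E₂)))⁻¹) := by
  set Γ₁ := Γ.image (· ∩ E₁) with hΓ₁def
  set Γ₂ := Γ.image (· ∩ E₂) with hΓ₂def
  set M₁ := Mod2 Γ₁ with hM₁def
  set M₂ := Mod2 Γ₂ with hM₂def
  have hmem1 : ∀ γ ∈ Γ, γ ∩ E₁ ∈ Γ₁ := fun γ hγ => Finset.mem_image_of_mem _ hγ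
  have hmem2 : ∀ γ ∈ Γ, γ ∩ E₂ ∈ Γ₂ := fun γ hγ => Finset.mem_image_of_mem _ hγ
  have hne1 : ∀ γ' ∈ Γ₁, Finset.Nonempty γ' := by
    intro γ' hγ'
    obtain ⟨γ, hγ, rfl⟩ := Finset.mem_image.mp hγ'
    exact (hmeets γ hγ).1
  have hne2 : ∀ γ' ∈ Γ₂, Finset.Nonempty γ' := by
    intro γ' hγ'
    obtain ⟨γ, hγ, rfl⟩ := Finset.mem_image.mp hγ'
    exact (hmeets γ hγ).2
  have hsub1 : ∀ γ' ∈ Γ₁, γ' ⊆ E₁ := by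
    intro γ' hγ'
    obtain ⟨γ, hγ, rfl⟩ := Finset.mem_image.mp hγ'
    exact Finset.inter_subset_right
  have hsub2 : ∀ γ' ∈ Γ₂, γ' ⊆ E₂ := by
    intro γ' hγ'
    obtain ⟨γ, hγ, rfl⟩ := Finset.mem_image.mp hγ'
    exact Finset.inter_subset_right
  have hΓne : ∀ γ ∈ Γ, Finset.Nonempty γ := by
    intro γ hγ
    obtain ⟨e, he⟩ := (hmeets γ hγ).1
    exact ⟨e, (Finset.mem_inter.mp he).1⟩
  have hΓ₁ne : Γ₁.Nonempty := hΓ.image _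
  have hΓ₂ne : Γ₂.Nonempty := hΓ.image _
  have hM₁ : 0 < M₁ := mod2_pos Γ₁ hΓ₁ne hne1
  have hM₂ : 0 < M₂ := mod2_pos Γ₂ hΓ₂ne hne2
  have hM : 0 < Mod2 Γ := mod2_pos Γ hΓ hΓne
  have hMsum : 0 < M₁ + M₂ := by linarith
  have hcomb := mod2_combine Γ Γ₁ Γ₂ E₁ E₂ hdisj hcover hmem1 hmem2 hne1 hne2
    (M₂ / (M₁ + M₂)) (M₁ / (M₁ + M₂)) (by positivity) (by positivity)
    (by field_simp; ring)
  have heq : (M₂ / (M₁ + M₂)) ^ 2 * M₁ + (M₁ / (M₁ + M₂)) ^ 2 * M₂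
      = (M₁⁻¹ + M₂⁻¹)⁻¹ := by
    field_simp
    ring
  rw [heq] at hcomb
  have hK : 0 < M₁⁻¹ + M₂⁻¹ := by positivity
  have part1 : M₁⁻¹ + M₂⁻¹ ≤ (Mod2 Γ)⁻¹ := by
    calc M₁⁻¹ + M₂⁻¹ = ((M₁⁻¹ + M₂⁻¹)⁻¹)⁻¹ := (inv_inv _).symm
      _ ≤ (Mod2 Γ)⁻¹ := inv_anti₀ hM hcomb
  refine ⟨part1, fun hdiveq => ?_⟩
  have hdiv : ∀ γ₁ ∈ Γ₁, ∀ γ₂ ∈ Γ₂, γ₁ ∪ γ₂ ∈ Γ := by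
    intro γ₁ h₁ γ₂ h₂
    rw [hdiveq]
    exact Finset.mem_image₂_of_mem h₁ h₂
  have hlow := mod2_divide Γ Γ₁ Γ₂ E₁ E₂ hdisj hcover hΓ₁ne hΓ₂ne hsub1 hsub2
    hM₁ hM₂ hdiv hΓne
  have part2 : (Mod2 Γ)⁻¹ ≤ M₁⁻¹ + M₂⁻¹ := by
    calc (Mod2 Γ)⁻¹ ≤ (((M₁)⁻¹ + (M₂)⁻¹)⁻¹)⁻¹ :=
          inv_anti₀ (inv_pos.mpr hK) hlow
      _ = M₁⁻¹ + M₂⁻¹ := inv_inv _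
  exact le_antisymm part2 part1
end
end
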